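/- Let V : E → ℝ be twice continuously differentiable and let g ∈ E be an invertible matrix such that V(x·g) = V(x) for all x ∈ E. Then for all v, w ∈ E, D²V(g)(v·g, w) = D²V(I)(v, w·g⁻¹); equivalently, ∇²V(g)·(v·g) = (∇²V(I)·v)·(g⁻¹)ᵀ, where the operators ∇²V(g), ∇²V(I) : E → E represent the Hessian bilinear forms via the Frobenius inner product. -/

import Mathlib

open scoped Matrix

attribute [local instance] Matrix.frobeniusNormedAddCommGroup Matrix.frobeniusNormedSpace

/-- **Lemma 1(c)**: if a `C²` function `V` on real `n × n` matrices is invariant under right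
translation by an invertible matrix `g`, i.e. `V (x * g) = V x` for all `x`, then its second
derivative satisfies `D²V(g)(v·g, w) = D²V(I)(v, w·g⁻¹)` for all `v, w`. -/
theorem hessian_right_translation {n : ℕ} (V : Matrix (Fin n) (Fin n) ℝ → ℝ)
    (hV : ContDiff ℝ 2 V)
    (g : Matrix (Fin n) (Fin n) ℝ) (hg : IsUnit g)
    (hinv : ∀ x, V (x * g) = V x) :
    ∀ v w : Matrix (Fin n) (Fin n) ℝ,
      fderiv ℝ (fderiv ℝ V) g (v * g) w = fderiv ℝ (fderiv ℝ V) 1 v (w * g⁻¹) := by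
  intro v w
  let E := Matrix (Fin n) (Fin n) ℝ
  -- right multiplication by `g` as a continuous linear map
  set R : E →L[ℝ] E := LinearMap.toContinuousLinearMap (LinearMap.mulRight ℝ g) with hR
  have hRapp : ∀ x : E, R x = x * g := fun x => rfl
  -- precomposition with `R` as a continuous linear map
  set P :=
    (ContinuousLinearMap.compL ℝ E E ℝ).flip R with hP
  have hPapp : ∀ f, P f = f.comp R := fun f => rfl
  have hVd : Differentiable ℝ V := hV.differentiable (by norm_num)
  -- Step 1: fderiv V x = (fderiv V (x*g)).comp R
  have step1 : ∀ x : E, fderiv ℝ V x = (fderiv ℝ V (x * g)).comp R := by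
    intro x
    have h1 : HasFDerivAt (fun y => V (R y)) ((fderiv ℝ V (x * g)).comp R) x := by
      have := ((hVd (x * g)).hasFDerivAt.comp x R.hasFDerivAt)
      exact this
    have h2 : (fun y => V (R y)) = V := by
      funext y; simp [hRapp, hinv]
    rw [h2] at h1
    exact h1.fderiv
  have hF := hV.fderiv_right (m := 1) (by norm_num)
  have hFd := hF.differentiable one_ne_zero
  -- Step 2: differentiate the identity `fderiv V = P ∘ (fderiv V) ∘ R` at 1
  have h3 : HasFDerivAt (fun x => P (fderiv ℝ V (R x)))
      (P.comp ((fderiv ℝ (fderiv ℝ V) g).comp R)) 1 := by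
    have hR1 : R (1 : E) = g := by simp [hRapp]
    have hchain : HasFDerivAt (fun x => fderiv ℝ V (R x))
        ((fderiv ℝ (fderiv ℝ V) g).comp R) 1 := by
      have h := (hFd (R 1)).hasFDerivAt.comp (1 : E) R.hasFDerivAt
      rwa [hR1] at h
    exact P.hasFDerivAt.comp 1 hchain
  have h4 : (fun x : E => P (fderiv ℝ V (R x))) = fderiv ℝ V := by
    funext x
    rw [hPapp, hRapp]; exact (step1 x).symm
  rw [h4] at h3
  have h5 : fderiv ℝ (fderiv ℝ V) 1 = P.comp ((fderiv ℝ (fderiv ℝ V) g).comp R) :=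
    h3.fderiv
  have h6 : fderiv ℝ (fderiv ℝ V) 1 v (w * g⁻¹) =
      fderiv ℝ (fderiv ℝ V) g (v * g) ((w * g⁻¹) * g) := by
    rw [h5]; rfl
  rw [h6, Matrix.mul_assoc,
    Matrix.nonsing_inv_mul g ((Matrix.isUnit_iff_isUnit_det g).mp hg), Matrix.mul_one]
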